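/- arXiv:1909.01096 — 2 statements merged into one kernel-verified Lean document; each statement's English description precedes it below -/
import Mathlib

section
/- Let j ≥ 0 be a half-integer, m₁, m₂ half-integers with j+m₁, j+m₂ ∈ ℤ and −j ≤ m₁, m₂ ≤ j, n a real number, and ε ∈ {+1, −1}. Then for all ζ, ψ, φ ∈ ℝ and all θ ∈ (0, π): exp(ε i ψ) · ( csc θ · ∂W/∂φ + ε i · ∂W/∂θ − cot θ · ∂W/∂ψ )(ζ,ψ,θ,φ) = −i · √((j−εm₁)(j+εm₁+1)) · W^{(j,n)}_{m₁+ε, m₂}(ζ,ψ,θ,φ), where W denotes the function W^{(j,n)}_{m₁,m₂} and ∂W/∂φ, ∂W/∂θ, ∂W/∂ψ denote its partial derivatives in the respective variables. -/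
/-- A half-integer is an element of `(1/2)ℤ`. -/
def HalfInt (x : ℝ) : Prop := ∃ k : ℤ, x = k / 2

/-- The little Wigner d-function `d^j_{m₁,m₂}(θ)`, defined as the finite sum
`Σ_p (−1)^{m₂−m₁+p} / ((j+m₁−p)!·p!·(m₂−m₁+p)!·(j−m₂−p)!) · sin(θ/2)^{m₂−m₁+2p} ·
cos(θ/2)^{2j+m₁−m₂−2p}` over integers `p` with `max(0, m₁−m₂) ≤ p ≤ min(j−m₂, j+m₁)`
(the factorials of the nonnegative integers appearing are expressed via the Gamma
function, `x! = Γ(x+1)`). -/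
noncomputable def wignerd (j m₁ m₂ θ : ℝ) : ℝ :=
  ∑ p ∈ Finset.Icc (max 0 ⌈m₁ - m₂⌉) ⌊min (j - m₂) (j + m₁)⌋,
    (-1 : ℝ) ^ (⌈m₂ - m₁⌉ + p) /
      (Real.Gamma (j + m₁ - (p : ℝ) + 1) * Real.Gamma ((p : ℝ) + 1) *
        Real.Gamma (m₂ - m₁ + (p : ℝ) + 1) * Real.Gamma (j - m₂ - (p : ℝ) + 1)) *
      Real.sin (θ / 2) ^ (⌈m₂ - m₁⌉ + 2 * p) *
      Real.cos (θ / 2) ^ (⌊2 * j + m₁ - m₂⌋ - 2 * p)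

noncomputable def G (n : ℤ) : ℝ := Real.Gamma n

noncomputable def K (a b μ p : ℤ) : ℝ :=
  (-1 : ℝ) ^ (μ + p) / (G (a - p + 1) * G (p + 1) * G (μ + p + 1) * G (b - p + 1))

lemma Gz {n : ℤ} (h : n ≤ 0) : G n = 0 := by
  obtain ⟨m, rfl⟩ := Int.exists_eq_neg_ofNat h
  unfold G
  push_cast
  exact Real.Gamma_neg_nat_eq_zero m

lemma Gpos {n : ℤ} (h : 0 < n) : 0 < G n :=
  Real.Gamma_pos_of_pos (by exact_mod_cast h)

lemma Gne {n : ℤ} (h : 0 < n) : G n ≠ 0 := ne_of_gt (Gpos h)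

lemma Gsucc (n : ℤ) (h : 0 < n) : G (n + 1) = (n : ℝ) * G n := by
  unfold G
  push_cast
  exact Real.Gamma_add_one (by exact_mod_cast h.ne')

lemma K_eq_zero {a b μ p : ℤ} (h : p < 0 ∨ μ + p < 0 ∨ a < p ∨ b < p) :
    K a b μ p = 0 := by
  unfold K
  rcases h with h | h | h | h
  · rw [Gz (n := p + 1) (by omega)]; simp
  · rw [Gz (n := μ + p + 1) (by omega)]; simp
  · rw [Gz (n := a - p + 1) (by omega)]; simp
  · rw [Gz (n := b - p + 1) (by omega)]; simp

lemma cast_pos_ne {n : ℤ} (h : 0 < n) : (n : ℝ) ≠ 0 := by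
  have : (0:ℝ) < (n:ℝ) := by exact_mod_cast h
  linarith

lemma key_raise_core (a b μ q : ℤ) (ha : 0 ≤ a) (hb : 0 ≤ b) :
    ((μ : ℝ) + q) / (G (a - q + 1) * G (q + 1) * G (μ + q + 1) * G (b - q + 1))
      + ((b : ℝ) - q + 1) / (G (a - q + 2) * G q * G (μ + q) * G (b - q + 2))
      = ((a : ℝ) + 1) / (G (a - q + 2) * G (q + 1) * G (μ + q) * G (b - q + 1)) := by
  by_cases h1 : μ + q ≤ 0
  · rcases eq_or_lt_of_le h1 with h1e | h1l
    · have hnum : (μ : ℝ) + q = 0 := by exact_mod_cast congrArg (Int.cast : ℤ → ℝ) h1e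
      rw [Gz (n := μ + q) (le_of_eq h1e), hnum]
      simp
    · rw [Gz (n := μ + q) (by omega), Gz (n := μ + q + 1) (by omega)]
      simp
  push_neg at h1
  by_cases h2 : q < 0
  · rw [Gz (n := q + 1) (by omega), Gz (n := q) (by omega)]
    simp
  push_neg at h2
  by_cases h3 : b + 1 ≤ q
  · rcases eq_or_lt_of_le h3 with h3e | h3l
    · have hnum : (b : ℝ) - q + 1 = 0 := by
        have : (q : ℝ) = (b : ℝ) + 1 := by exact_mod_cast congrArg (Int.cast : ℤ → ℝ) h3e.symm
        rw [this]; ring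
      rw [Gz (n := b - q + 1) (by omega), hnum]
      simp
    · rw [Gz (n := b - q + 1) (by omega), Gz (n := b - q + 2) (by omega)]
      simp
  push_neg at h3
  by_cases h4 : a + 1 ≤ q
  · rcases eq_or_lt_of_le h4 with h4e | h4l
    · -- q = a + 1
      have hq1 : (0:ℤ) < q := by omega
      have hqa : (q : ℝ) = (a : ℝ) + 1 := by exact_mod_cast congrArg (Int.cast : ℤ → ℝ) h4e.symm
      have hGq : G (q + 1) = (q : ℝ) * G q := Gsucc q hq1
      have hGb : G (b - q + 2) = ((b : ℝ) - q + 1) * G (b - q + 1) := by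
        rw [show b - q + 2 = (b - q + 1) + 1 by ring, Gsucc (b - q + 1) (by omega)]
        push_cast; ring
      rw [Gz (n := a - q + 1) (by omega), hGq, hGb]
      have e1 : G (a - q + 2) ≠ 0 := Gne (by omega)
      have e2 : G q ≠ 0 := Gne hq1
      have e3 : G (μ + q) ≠ 0 := Gne (by omega)
      have e4 : G (b - q + 1) ≠ 0 := Gne (by omega)
      have e5 : ((b : ℝ) - q + 1) ≠ 0 := by
        have h5 : (0:ℤ) < b - q + 1 := by omega
        have := cast_pos_ne h5; push_cast at this; exact this
      have e6 : (q : ℝ) ≠ 0 := cast_pos_ne hq1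
      field_simp
      rw [zero_mul, div_zero, zero_add]; exact hqa
    · rw [Gz (n := a - q + 1) (by omega), Gz (n := a - q + 2) (by omega)]
      simp
  push_neg at h4
  -- now 0 ≤ q ≤ a, q ≤ b, μ + q ≥ 1
  rcases eq_or_lt_of_le h2 with h2e | h2l
  · -- q = 0
    obtain rfl : q = 0 := h2e.symm
    simp only [sub_zero, add_zero, Int.cast_zero]
    rw [Gz (n := 0) le_rfl]
    have hGμ : G (μ + 1) = (μ : ℝ) * G μ := Gsucc μ (by omega)
    have hGa : G (a + 2) = ((a : ℝ) + 1) * G (a + 1) := by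
      rw [show a + 2 = (a + 1) + 1 by ring, Gsucc (a + 1) (by omega)]
      push_cast; ring
    rw [hGμ, hGa]
    have e1 : G (a + 1) ≠ 0 := Gne (by omega)
    have e2 : G (1 : ℤ) ≠ 0 := Gne (by omega)
    have e3 : G μ ≠ 0 := Gne (by omega)
    have e4 : G (b + 1) ≠ 0 := Gne (by omega)
    have e6 : (μ : ℝ) ≠ 0 := cast_pos_ne (by omega)
    have e7 : ((a : ℝ) + 1) ≠ 0 := by
      have := cast_pos_ne (n := a + 1) (by omega); push_cast at this; exact this
    field_simp
    ring
  · -- q ≥ 1 generic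
    have hGq : G (q + 1) = (q : ℝ) * G q := Gsucc q h2l
    have hGμ : G (μ + q + 1) = ((μ : ℝ) + q) * G (μ + q) := by
      rw [Gsucc (μ + q) h1]; push_cast; ring
    have hGa : G (a - q + 2) = ((a : ℝ) - q + 1) * G (a - q + 1) := by
      rw [show a - q + 2 = (a - q + 1) + 1 by ring, Gsucc (a - q + 1) (by omega)]
      push_cast; ring
    have hGb : G (b - q + 2) = ((b : ℝ) - q + 1) * G (b - q + 1) := by
      rw [show b - q + 2 = (b - q + 1) + 1 by ring, Gsucc (b - q + 1) (by omega)]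
      push_cast; ring
    rw [hGq, hGμ, hGa, hGb]
    have e1 : G (a - q + 1) ≠ 0 := Gne (by omega)
    have e2 : G q ≠ 0 := Gne h2l
    have e3 : G (μ + q) ≠ 0 := Gne (by omega)
    have e4 : G (b - q + 1) ≠ 0 := Gne (by omega)
    have e5 : ((b : ℝ) - q + 1) ≠ 0 := by
      have h5 : (0:ℤ) < b - q + 1 := by omega
      have := cast_pos_ne h5; push_cast at this; exact this
    have e6 : (q : ℝ) ≠ 0 := cast_pos_ne h2l
    have e7 : ((μ : ℝ) + q) ≠ 0 := by
      have h5 : (0:ℤ) < μ + q := h1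
      have := cast_pos_ne h5; push_cast at this; exact this
    have e8 : ((a : ℝ) - q + 1) ≠ 0 := by
      have h5 : (0:ℤ) < a - q + 1 := by omega
      have := cast_pos_ne h5; push_cast at this; exact this
    field_simp
    ring

lemma key_raise (a b μ q : ℤ) (ha : 0 ≤ a) (hb : 0 ≤ b) :
    ((μ : ℝ) + q) * K a b μ q - ((b : ℝ) - q + 1) * K a b μ (q - 1)
      = -((a : ℝ) + 1) * K (a + 1) b (μ - 1) q := by
  unfold K
  rw [show a - (q-1) + 1 = a - q + 2 by ring, show (q-1) + 1 = q by ring,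
    show μ + (q-1) + 1 = μ + q by ring, show b - (q-1) + 1 = b - q + 2 by ring,
    show a + 1 - q + 1 = a - q + 2 by ring, show μ - 1 + q + 1 = μ + q by ring]
  have hs1 : ((-1:ℝ)) ^ (μ + (q - 1)) = -((-1:ℝ)) ^ (μ + q) := by
    rw [show μ + (q - 1) = (μ + q) + (-1) by ring, zpow_add₀ (by norm_num : (-1:ℝ) ≠ 0)]
    norm_num
  have hs2 : ((-1:ℝ)) ^ (μ - 1 + q) = -((-1:ℝ)) ^ (μ + q) := by
    rw [show μ - 1 + q = (μ + q) + (-1) by ring, zpow_add₀ (by norm_num : (-1:ℝ) ≠ 0)]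
    norm_num
  rw [hs1, hs2]
  have h := key_raise_core a b μ q ha hb
  linear_combination ((-1:ℝ)) ^ (μ + q) * h

lemma n_pow_pred (n : ℕ) (x : ℝ) : (n : ℝ) * x ^ (n - 1) * x = (n : ℝ) * x ^ n := by
  cases n with
  | zero => simp
  | succ k => rw [Nat.add_sub_cancel, pow_succ]; ring

lemma zpow_toNat' (x : ℝ) (n : ℤ) (h : 0 ≤ n) : x ^ n = x ^ n.toNat := by
  conv_lhs => rw [← Int.toNat_of_nonneg h]
  exact zpow_natCast x n.toNat

lemma term_core (Kv s c m1 m2 A B M Pr : ℝ) (n₁ n₂ : ℕ)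
    (hn₁ : (n₁ : ℝ) = M + 2 * Pr) (hn₂ : (n₂ : ℝ) = A + B - 2 * Pr)
    (hM : M = m2 - m1) (hAB : A - B = m1 + m2) (hpy : s ^ 2 + c ^ 2 = 1) :
    (2 * (s * c)) * (Kv * ((n₁ : ℝ) * s ^ (n₁ - 1) * (c * 2⁻¹)) * c ^ n₂
        + Kv * s ^ n₁ * ((n₂ : ℝ) * c ^ (n₂ - 1) * (-s * 2⁻¹)))
      + (m2 - m1 * (c ^ 2 - s ^ 2)) * (Kv * s ^ n₁ * c ^ n₂)
    = 2 * (Kv * (M + Pr) * s ^ n₁ * c ^ (n₂ + 2))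
      - 2 * (Kv * (B - Pr) * s ^ (n₁ + 2) * c ^ n₂) := by
  have e₁ := n_pow_pred n₁ s
  have e₂ := n_pow_pred n₂ c
  linear_combination (Kv * c ^ 2 * c ^ n₂) * e₁ - (Kv * s ^ 2 * s ^ n₁) * e₂
    + (Kv * s ^ n₁ * c ^ n₂ * c ^ 2) * hn₁ - (Kv * s ^ n₁ * c ^ n₂ * s ^ 2) * hn₂
    - (Kv * s ^ n₁ * c ^ n₂ * m2) * hpy
    - (Kv * s ^ n₁ * c ^ n₂ * s ^ 2) * hAB - (Kv * s ^ n₁ * c ^ n₂ * c ^ 2) * hM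

lemma wignerd_eq (j m₁ m₂ : ℝ) (a b μ : ℤ) (hA : (a : ℝ) = j + m₁) (hB : (b : ℝ) = j - m₂)
    (hM : (μ : ℝ) = m₂ - m₁) (θ : ℝ) :
    wignerd j m₁ m₂ θ = ∑ p ∈ Finset.Icc (max 0 (-μ)) (min b a),
      K a b μ p * Real.sin (θ / 2) ^ (μ + 2 * p).toNat
        * Real.cos (θ / 2) ^ (a + b - 2 * p).toNat := by
  have hceil : ⌈m₁ - m₂⌉ = -μ := by
    rw [show m₁ - m₂ = ((-μ : ℤ) : ℝ) by push_cast; linarith]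
    exact Int.ceil_intCast _
  have hceil2 : ⌈m₂ - m₁⌉ = μ := by
    rw [show m₂ - m₁ = ((μ : ℤ) : ℝ) by push_cast; linarith]
    exact Int.ceil_intCast _
  have hfloor1 : ⌊min (j - m₂) (j + m₁)⌋ = min b a := by
    rw [show min (j - m₂) (j + m₁) = ((min b a : ℤ) : ℝ) by push_cast [← hA, ← hB]; rfl]
    exact Int.floor_intCast _
  have hfloor2 : ⌊2 * j + m₁ - m₂⌋ = a + b := by
    rw [show 2 * j + m₁ - m₂ = ((a + b : ℤ) : ℝ) by push_cast; linarith]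
    exact Int.floor_intCast _
  unfold wignerd
  rw [hceil, hfloor1]
  apply Finset.sum_congr rfl
  intro p hp
  rw [Finset.mem_Icc] at hp
  have hp0 : 0 ≤ p := le_trans (le_max_left _ _) hp.1
  have hpμ : -μ ≤ p := le_trans (le_max_right _ _) hp.1
  have hpa : p ≤ a := le_trans hp.2 (min_le_right _ _)
  have hpb : p ≤ b := le_trans hp.2 (min_le_left _ _)
  have g1 : j + m₁ - (p : ℝ) + 1 = ((a - p + 1 : ℤ) : ℝ) := by push_cast; linarith
  have g2 : (p : ℝ) + 1 = ((p + 1 : ℤ) : ℝ) := by push_cast; ring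
  have g3 : m₂ - m₁ + (p : ℝ) + 1 = ((μ + p + 1 : ℤ) : ℝ) := by push_cast; linarith
  have g4 : j - m₂ - (p : ℝ) + 1 = ((b - p + 1 : ℤ) : ℝ) := by push_cast; linarith
  rw [hceil2, hfloor2, g1, g2, g3, g4,
    zpow_toNat' _ (μ + 2 * p) (by omega), zpow_toNat' _ (a + b - 2 * p) (by omega)]
  rfl

lemma wignerd_hasDerivAt (a b μ : ℤ) (θ : ℝ) :
    HasDerivAt (fun t => ∑ p ∈ Finset.Icc (max 0 (-μ)) (min b a),
        K a b μ p * Real.sin (t / 2) ^ (μ + 2 * p).toNat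
          * Real.cos (t / 2) ^ (a + b - 2 * p).toNat)
      (∑ p ∈ Finset.Icc (max 0 (-μ)) (min b a),
        (K a b μ p * (((μ + 2 * p).toNat : ℝ) * Real.sin (θ / 2) ^ ((μ + 2 * p).toNat - 1)
            * (Real.cos (θ / 2) * 2⁻¹)) * Real.cos (θ / 2) ^ (a + b - 2 * p).toNat
          + K a b μ p * Real.sin (θ / 2) ^ (μ + 2 * p).toNat
            * (((a + b - 2 * p).toNat : ℝ) * Real.cos (θ / 2) ^ ((a + b - 2 * p).toNat - 1)
              * (-Real.sin (θ / 2) * 2⁻¹)))) θ := by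
  apply HasDerivAt.fun_sum
  intro p _
  have hhalf : HasDerivAt (fun t : ℝ => t / 2) (2⁻¹ : ℝ) θ := by
    simpa using (hasDerivAt_id θ).div_const 2
  have hs : HasDerivAt (fun t : ℝ => Real.sin (t / 2)) (Real.cos (θ / 2) * 2⁻¹) θ :=
    by have := (Real.hasDerivAt_sin (θ / 2)).comp θ hhalf; exact this
  have hc : HasDerivAt (fun t : ℝ => Real.cos (t / 2)) (-Real.sin (θ / 2) * 2⁻¹) θ :=
    by have := (Real.hasDerivAt_cos (θ / 2)).comp θ hhalf; exact this
  exact ((hs.pow _).const_mul _).mul (hc.pow _)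

noncomputable def Pterm (a b μ : ℤ) (s c : ℝ) (q : ℤ) : ℝ :=
  K a b μ q * ((μ : ℝ) + q) * s ^ (μ + 2 * q).toNat * c ^ (a + b + 2 - 2 * q).toNat

noncomputable def Qterm (a b μ : ℤ) (s c : ℝ) (q : ℤ) : ℝ :=
  K a b μ q * ((b : ℝ) - q) * s ^ (μ + 2 * q + 2).toNat * c ^ (a + b - 2 * q).toNat

noncomputable def Rterm (a b μ : ℤ) (s c : ℝ) (q : ℤ) : ℝ :=
  K (a + 1) b (μ - 1) q * s ^ (μ + 2 * q).toNat * c ^ (a + b + 2 - 2 * q).toNat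

lemma PQR_point (a b μ q : ℤ) (ha : 0 ≤ a) (hb : 0 ≤ b) (s c : ℝ) :
    2 * Pterm a b μ s c q - 2 * Qterm a b μ s c (q - 1)
      = -((a : ℝ) + 1) * (2 * Rterm a b μ s c q) := by
  unfold Pterm Qterm Rterm
  rw [show μ + 2 * (q - 1) + 2 = μ + 2 * q by ring,
    show a + b - 2 * (q - 1) = a + b + 2 - 2 * q by ring]
  have hcast : ((b : ℝ) - ((q - 1 : ℤ) : ℝ)) = (b : ℝ) - q + 1 := by push_cast; ring
  rw [hcast]
  linear_combination (2 * s ^ (μ + 2 * q).toNat * c ^ (a + b + 2 - 2 * q).toNat)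
    * key_raise a b μ q ha hb

lemma sum_PQR (a b μ : ℤ) (ha : 0 ≤ a) (hb : 0 ≤ b) (s c : ℝ) :
    ∑ p ∈ Finset.Icc (max 0 (-μ)) (min b a),
      (2 * Pterm a b μ s c p - 2 * Qterm a b μ s c p)
    = ∑ q ∈ Finset.Icc (max 0 (-(μ - 1))) (min b (a + 1)),
      -((a : ℝ) + 1) * (2 * Rterm a b μ s c q) := by
  have hQshift : ∑ p ∈ Finset.Icc (max 0 (-μ)) (min b a), 2 * Qterm a b μ s c p
      = ∑ q ∈ Finset.Icc (max 0 (-μ) + 1) (min b a + 1), 2 * Qterm a b μ s c (q - 1) := by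
    rw [← Finset.map_add_right_Icc _ _ 1, Finset.sum_map]
    apply Finset.sum_congr rfl
    intro p _
    simp [addRightEmbedding]
  rw [Finset.sum_sub_distrib, hQshift]
  have hPext : ∑ p ∈ Finset.Icc (max 0 (-μ)) (min b a), 2 * Pterm a b μ s c p
      = ∑ p ∈ Finset.Icc (max 0 (-μ)) (min b a + 1), 2 * Pterm a b μ s c p := by
    apply Finset.sum_subset (Finset.Icc_subset_Icc le_rfl (by omega))
    intro x hx hnx
    rw [Finset.mem_Icc] at hx; rw [Finset.mem_Icc] at hnx
    push_neg at hnx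
    have hxv : min b a < x := hnx hx.1
    have : K a b μ x = 0 := K_eq_zero (by omega)
    unfold Pterm; rw [this]; ring
  have hQext : ∑ q ∈ Finset.Icc (max 0 (-μ) + 1) (min b a + 1), 2 * Qterm a b μ s c (q - 1)
      = ∑ q ∈ Finset.Icc (max 0 (-μ)) (min b a + 1), 2 * Qterm a b μ s c (q - 1) := by
    apply Finset.sum_subset (Finset.Icc_subset_Icc (by omega) le_rfl)
    intro x hx hnx
    rw [Finset.mem_Icc] at hx; rw [Finset.mem_Icc] at hnx
    push_neg at hnx
    have hxv : x < max 0 (-μ) + 1 := by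
      by_contra hcon
      exact absurd (hnx (by omega)) (by omega)
    have : K a b μ (x - 1) = 0 := K_eq_zero (by omega)
    unfold Qterm; rw [this]; ring
  have hRext : ∑ q ∈ Finset.Icc (max 0 (-(μ - 1))) (min b (a + 1)),
        -((a : ℝ) + 1) * (2 * Rterm a b μ s c q)
      = ∑ q ∈ Finset.Icc (max 0 (-μ)) (min b a + 1),
        -((a : ℝ) + 1) * (2 * Rterm a b μ s c q) := by
    apply Finset.sum_subset (Finset.Icc_subset_Icc (by omega) (by omega))
    intro x hx hnx
    rw [Finset.mem_Icc] at hx; rw [Finset.mem_Icc] at hnx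
    push_neg at hnx
    have : K (a + 1) b (μ - 1) x = 0 := by
      by_cases hl : max 0 (-(μ - 1)) ≤ x
      · exact K_eq_zero (by have := hnx hl; omega)
      · exact K_eq_zero (by omega)
    unfold Rterm; rw [this]; ring
  rw [hPext, hQext, hRext, ← Finset.sum_sub_distrib]
  apply Finset.sum_congr rfl
  intro q _
  exact PQR_point a b μ q ha hb s c

lemma core_raise (j m₁ m₂ : ℝ) (a b μ : ℤ) (hA : (a : ℝ) = j + m₁) (hB : (b : ℝ) = j - m₂)
    (hM : (μ : ℝ) = m₂ - m₁) (ha0 : 0 ≤ a) (hb0 : 0 ≤ b) (θ : ℝ) :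
    Real.sin θ * deriv (fun t => wignerd j m₁ m₂ t) θ
        + (m₂ - m₁ * Real.cos θ) * wignerd j m₁ m₂ θ
      = -(j + m₁ + 1) * (Real.sin θ * wignerd j (m₁ + 1) m₂ θ) := by
  have hA1 : ((a + 1 : ℤ) : ℝ) = j + (m₁ + 1) := by push_cast; linarith
  have hM1 : ((μ - 1 : ℤ) : ℝ) = m₂ - (m₁ + 1) := by push_cast; linarith
  have hsin : Real.sin θ = 2 * (Real.sin (θ / 2) * Real.cos (θ / 2)) := by
    conv_lhs => rw [show θ = 2 * (θ / 2) by ring]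
    rw [Real.sin_two_mul]; ring
  have hcos : Real.cos θ = Real.cos (θ / 2) ^ 2 - Real.sin (θ / 2) ^ 2 := by
    conv_lhs => rw [show θ = 2 * (θ / 2) by ring]
    exact Real.cos_two_mul' _
  have hfun : (fun t => wignerd j m₁ m₂ t)
      = (fun t => ∑ p ∈ Finset.Icc (max 0 (-μ)) (min b a),
          K a b μ p * Real.sin (t / 2) ^ (μ + 2 * p).toNat
            * Real.cos (t / 2) ^ (a + b - 2 * p).toNat) :=
    funext (fun t => wignerd_eq j m₁ m₂ a b μ hA hB hM t)
  rw [hfun, (wignerd_hasDerivAt a b μ θ).deriv,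
    wignerd_eq j m₁ m₂ a b μ hA hB hM θ,
    wignerd_eq j (m₁ + 1) m₂ (a + 1) b (μ - 1) hA1 hB hM1 θ]
  rw [Finset.mul_sum, Finset.mul_sum, ← Finset.sum_add_distrib]
  rw [Finset.mul_sum, Finset.mul_sum]
  have hL : ∀ p ∈ Finset.Icc (max 0 (-μ)) (min b a),
      Real.sin θ * (K a b μ p * (((μ + 2 * p).toNat : ℝ)
            * Real.sin (θ / 2) ^ ((μ + 2 * p).toNat - 1)
            * (Real.cos (θ / 2) * 2⁻¹)) * Real.cos (θ / 2) ^ (a + b - 2 * p).toNat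
          + K a b μ p * Real.sin (θ / 2) ^ (μ + 2 * p).toNat
            * (((a + b - 2 * p).toNat : ℝ) * Real.cos (θ / 2) ^ ((a + b - 2 * p).toNat - 1)
              * (-Real.sin (θ / 2) * 2⁻¹)))
        + (m₂ - m₁ * Real.cos θ)
          * (K a b μ p * Real.sin (θ / 2) ^ (μ + 2 * p).toNat
            * Real.cos (θ / 2) ^ (a + b - 2 * p).toNat)
      = 2 * Pterm a b μ (Real.sin (θ / 2)) (Real.cos (θ / 2)) p
        - 2 * Qterm a b μ (Real.sin (θ / 2)) (Real.cos (θ / 2)) p := by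
    intro p hp
    rw [Finset.mem_Icc] at hp
    have hp0 : 0 ≤ p := le_trans (le_max_left _ _) hp.1
    have hpμ : -μ ≤ p := le_trans (le_max_right _ _) hp.1
    have hpa : p ≤ a := le_trans hp.2 (min_le_right _ _)
    have hpb : p ≤ b := le_trans hp.2 (min_le_left _ _)
    unfold Pterm Qterm
    rw [hsin, hcos,
      show (a + b + 2 - 2 * p).toNat = (a + b - 2 * p).toNat + 2 by omega,
      show (μ + 2 * p + 2).toNat = (μ + 2 * p).toNat + 2 by omega]
    have hn₁ : (((μ + 2 * p).toNat : ℕ) : ℝ) = (μ : ℝ) + 2 * p := by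
      exact_mod_cast congrArg (Int.cast : ℤ → ℝ) (Int.toNat_of_nonneg (show (0:ℤ) ≤ μ + 2*p by omega))
    have hn₂ : (((a + b - 2 * p).toNat : ℕ) : ℝ) = (a : ℝ) + b - 2 * p := by
      exact_mod_cast congrArg (Int.cast : ℤ → ℝ) (Int.toNat_of_nonneg (show (0:ℤ) ≤ a + b - 2*p by omega))
    exact term_core (K a b μ p) (Real.sin (θ / 2)) (Real.cos (θ / 2)) m₁ m₂
      ((a : ℝ)) ((b : ℝ)) ((μ : ℝ)) ((p : ℝ)) _ _
      (by rw [hn₁]) (by rw [hn₂]) (by linarith) (by push_cast; linarith)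
      (Real.sin_sq_add_cos_sq _)
  rw [Finset.sum_congr rfl hL]
  have hR : ∀ q ∈ Finset.Icc (max 0 (-(μ - 1))) (min b (a + 1)),
      -(j + m₁ + 1) * (Real.sin θ * (K (a+1) b (μ-1) q
          * Real.sin (θ/2) ^ ((μ-1) + 2*q).toNat * Real.cos (θ/2) ^ ((a+1) + b - 2*q).toNat))
      = -((a : ℝ) + 1) * (2 * Rterm a b μ (Real.sin (θ / 2)) (Real.cos (θ / 2)) q) := by
    intro q hq
    rw [Finset.mem_Icc] at hq
    have hq0 : 0 ≤ q := le_trans (le_max_left _ _) hq.1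
    have hqμ : -(μ - 1) ≤ q := le_trans (le_max_right _ _) hq.1
    have hqa : q ≤ a + 1 := le_trans hq.2 (min_le_right _ _)
    have hqb : q ≤ b := le_trans hq.2 (min_le_left _ _)
    unfold Rterm
    rw [hsin,
      show (μ + 2 * q).toNat = ((μ - 1) + 2 * q).toNat + 1 by omega,
      show (a + b + 2 - 2 * q).toNat = ((a + 1) + b - 2 * q).toNat + 1 by omega,
      show j + m₁ + 1 = (a : ℝ) + 1 by linarith]
    ring
  rw [Finset.sum_congr rfl hR]
  exact sum_PQR a b μ ha0 hb0 _ _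

lemma wignerd_neg (j m₁ m₂ : ℝ) (a b μ : ℤ) (hA : (a : ℝ) = j + m₁) (hB : (b : ℝ) = j - m₂)
    (hM : (μ : ℝ) = m₂ - m₁) (θ : ℝ) :
    wignerd j m₁ m₂ θ = (-1 : ℝ) ^ μ * wignerd j (-m₁) (-m₂) θ := by
  have hA' : ((b + μ : ℤ) : ℝ) = j + -m₁ := by push_cast; linarith
  have hB' : ((a + μ : ℤ) : ℝ) = j - -m₂ := by push_cast; linarith
  have hM' : ((-μ : ℤ) : ℝ) = -m₂ - -m₁ := by push_cast; linarith
  rw [wignerd_eq j m₁ m₂ a b μ hA hB hM θ,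
    wignerd_eq j (-m₁) (-m₂) (b + μ) (a + μ) (-μ) hA' hB' hM' θ, Finset.mul_sum]
  have hset : Finset.Icc (max 0 (- -μ)) (min (a + μ) (b + μ))
      = Finset.Icc (max 0 (-μ) + μ) (min b a + μ) := by
    congr 1 <;> omega
  rw [hset, ← Finset.map_add_right_Icc _ _ μ, Finset.sum_map]
  apply Finset.sum_congr rfl
  intro p hp
  rw [Finset.mem_Icc] at hp
  simp only [addRightEmbedding_apply]
  rw [show -μ + 2 * (p + μ) = μ + 2 * p by ring,
    show b + μ + (a + μ) - 2 * (p + μ) = a + b - 2 * p by ring]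
  unfold K
  rw [show b + μ - (p + μ) + 1 = b - p + 1 by ring, show (p + μ) + 1 = μ + p + 1 by ring,
    show -μ + (p + μ) + 1 = p + 1 by ring, show a + μ - (p + μ) + 1 = a - p + 1 by ring,
    show -μ + (p + μ) = p by ring, show μ + p = μ + p by rfl,
    zpow_add₀ (by norm_num : (-1:ℝ) ≠ 0) μ p]
  ring

lemma core_lower (j m₁ m₂ : ℝ) (a b μ : ℤ) (hA : (a : ℝ) = j + m₁) (hB : (b : ℝ) = j - m₂)
    (hM : (μ : ℝ) = m₂ - m₁) (ha0 : 0 ≤ a) (hb0 : 0 ≤ b) (haμ : 0 ≤ a + μ) (hbμ : 0 ≤ b + μ)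
    (θ : ℝ) :
    -(Real.sin θ * deriv (fun t => wignerd j m₁ m₂ t) θ)
        + (m₂ - m₁ * Real.cos θ) * wignerd j m₁ m₂ θ
      = -(j - m₁ + 1) * (Real.sin θ * wignerd j (m₁ - 1) m₂ θ) := by
  have hA' : ((b + μ : ℤ) : ℝ) = j + -m₁ := by push_cast; linarith
  have hB' : ((a + μ : ℤ) : ℝ) = j - -m₂ := by push_cast; linarith
  have hM' : ((-μ : ℤ) : ℝ) = -m₂ - -m₁ := by push_cast; linarith
  have hfun' : (fun t => wignerd j (-m₁) (-m₂) t)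
      = (fun t => ∑ p ∈ Finset.Icc (max 0 (- -μ)) (min (a + μ) (b + μ)),
          K (b + μ) (a + μ) (-μ) p * Real.sin (t / 2) ^ (-μ + 2 * p).toNat
            * Real.cos (t / 2) ^ ((b + μ) + (a + μ) - 2 * p).toNat) :=
    funext (fun t => wignerd_eq j (-m₁) (-m₂) (b + μ) (a + μ) (-μ) hA' hB' hM' t)
  have hdiff : DifferentiableAt ℝ (fun t => wignerd j (-m₁) (-m₂) t) θ := by
    rw [hfun']
    exact (wignerd_hasDerivAt (b + μ) (a + μ) (-μ) θ).differentiableAt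
  have hzp : ((-1:ℝ)) ^ (μ + 1) = -(-1:ℝ) ^ μ := by
    rw [zpow_add_one₀ (by norm_num : (-1:ℝ) ≠ 0)]; ring
  have w1 : wignerd j m₁ m₂ θ = (-1 : ℝ) ^ μ * wignerd j (-m₁) (-m₂) θ :=
    wignerd_neg j m₁ m₂ a b μ hA hB hM θ
  have w2 : wignerd j (m₁ - 1) m₂ θ = -((-1 : ℝ) ^ μ) * wignerd j (-m₁ + 1) (-m₂) θ := by
    have h := wignerd_neg j (m₁ - 1) m₂ (a - 1) b (μ + 1)
      (by push_cast; linarith) hB (by push_cast; linarith) θ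
    rw [show -(m₁ - 1) = -m₁ + 1 by ring, hzp] at h
    exact h
  have dr : deriv (fun t => wignerd j m₁ m₂ t) θ
      = (-1 : ℝ) ^ μ * deriv (fun t => wignerd j (-m₁) (-m₂) t) θ := by
    have hf : (fun t => wignerd j m₁ m₂ t)
        = fun t => (-1 : ℝ) ^ μ * wignerd j (-m₁) (-m₂) t :=
      funext (fun t => wignerd_neg j m₁ m₂ a b μ hA hB hM t)
    rw [hf, deriv_const_mul _ hdiff]
  have hraise := core_raise j (-m₁) (-m₂) (b + μ) (a + μ) (-μ) hA' hB' hM'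
    (by omega) (by omega) θ
  rw [show -m₁ + 1 = (-m₁) + 1 by ring] at w2
  rw [show j + -m₁ + 1 = j - m₁ + 1 by ring] at hraise
  rw [dr, w1, w2]
  linear_combination (-((-1:ℝ) ^ μ)) * hraise

lemma wignerd_empty_raise (j m₁ m₂ : ℝ) (a b μ : ℤ) (hA1 : ((a + 1 : ℤ) : ℝ) = j + (m₁ + 1))
    (hB : (b : ℝ) = j - m₂) (hM1 : ((μ - 1 : ℤ) : ℝ) = m₂ - (m₁ + 1)) (hdeg : b + μ ≤ 0)
    (θ : ℝ) : wignerd j (m₁ + 1) m₂ θ = 0 := by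
  rw [wignerd_eq j (m₁ + 1) m₂ (a + 1) b (μ - 1) hA1 hB hM1 θ,
    Finset.Icc_eq_empty (by omega : ¬ (max 0 (-(μ - 1)) ≤ min b (a + 1))), Finset.sum_empty]

lemma wignerd_empty_lower (j m₁ m₂ : ℝ) (a b μ : ℤ) (hA1 : ((a - 1 : ℤ) : ℝ) = j + (m₁ - 1))
    (hB : (b : ℝ) = j - m₂) (hM1 : ((μ + 1 : ℤ) : ℝ) = m₂ - (m₁ - 1)) (hdeg : a ≤ 0)
    (θ : ℝ) : wignerd j (m₁ - 1) m₂ θ = 0 := by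
  rw [wignerd_eq j (m₁ - 1) m₂ (a - 1) b (μ + 1) hA1 hB hM1 θ,
    Finset.Icc_eq_empty (by omega : ¬ (max 0 (-(μ + 1)) ≤ min b (a - 1))), Finset.sum_empty]

lemma const_raise (j m₁ : ℝ) (h1 : 0 < j + m₁ + 1) (h2 : 0 < j - m₁) :
    Real.sqrt ((j - m₁) * (j + m₁ + 1))
        * Real.sqrt (Real.Gamma (j + (m₁ + 1) + 1) * Real.Gamma (j - (m₁ + 1) + 1))
      = (j + m₁ + 1) * Real.sqrt (Real.Gamma (j + m₁ + 1) * Real.Gamma (j - m₁ + 1)) := by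
  have g1 : Real.Gamma (j + (m₁ + 1) + 1) = (j + m₁ + 1) * Real.Gamma (j + m₁ + 1) := by
    rw [show j + (m₁ + 1) + 1 = (j + m₁ + 1) + 1 by ring, Real.Gamma_add_one h1.ne']
  have g2 : Real.Gamma (j - m₁ + 1) = (j - m₁) * Real.Gamma (j - m₁) := by
    rw [show j - m₁ + 1 = (j - m₁) + 1 by ring, Real.Gamma_add_one h2.ne']
  have g3 : j - (m₁ + 1) + 1 = j - m₁ := by ring
  have hAB : (j - m₁) * (j + m₁ + 1)
        * (Real.Gamma (j + (m₁ + 1) + 1) * Real.Gamma (j - (m₁ + 1) + 1))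
      = (j + m₁ + 1) ^ 2 * (Real.Gamma (j + m₁ + 1) * Real.Gamma (j - m₁ + 1)) := by
    rw [g1, g3, g2]; ring
  rw [← Real.sqrt_mul (by positivity), hAB, Real.sqrt_mul (sq_nonneg _), Real.sqrt_sq h1.le]

lemma const_lower (j m₁ : ℝ) (h1 : 0 < j - m₁ + 1) (h2 : 0 < j + m₁) :
    Real.sqrt ((j + m₁) * (j - m₁ + 1))
        * Real.sqrt (Real.Gamma (j + (m₁ - 1) + 1) * Real.Gamma (j - (m₁ - 1) + 1))
      = (j - m₁ + 1) * Real.sqrt (Real.Gamma (j + m₁ + 1) * Real.Gamma (j - m₁ + 1)) := by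
  have g1 : Real.Gamma (j - (m₁ - 1) + 1) = (j - m₁ + 1) * Real.Gamma (j - m₁ + 1) := by
    rw [show j - (m₁ - 1) + 1 = (j - m₁ + 1) + 1 by ring, Real.Gamma_add_one h1.ne']
  have g2 : Real.Gamma (j + m₁ + 1) = (j + m₁) * Real.Gamma (j + m₁) := by
    rw [show j + m₁ + 1 = (j + m₁) + 1 by ring, Real.Gamma_add_one h2.ne']
  have g3 : j + (m₁ - 1) + 1 = j + m₁ := by ring
  have hAB : (j + m₁) * (j - m₁ + 1)
        * (Real.Gamma (j + (m₁ - 1) + 1) * Real.Gamma (j - (m₁ - 1) + 1))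
      = (j - m₁ + 1) ^ 2 * (Real.Gamma (j + m₁ + 1) * Real.Gamma (j - m₁ + 1)) := by
    rw [g1, g3, g2]; ring
  rw [← Real.sqrt_mul (by positivity), hAB, Real.sqrt_mul (sq_nonneg _), Real.sqrt_sq h1.le]

open Classical in
/-- The Wigner D-function `W^{(j,n)}_{m₁,m₂}(ζ,ψ,θ,φ)`, with the convention that it is `0`
if `m₁` or `m₂` lies outside `[−j, j]` or `j ± m₁ ∉ ℤ` or `j ± m₂ ∉ ℤ`. -/
noncomputable def WignerD (j n m₁ m₂ : ℝ) (ζ ψ θ φ : ℝ) : ℂ :=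
  if (-j ≤ m₁ ∧ m₁ ≤ j) ∧ (-j ≤ m₂ ∧ m₂ ≤ j) ∧
      (∃ a : ℤ, j + m₁ = a) ∧ (∃ a : ℤ, j - m₁ = a) ∧
      (∃ a : ℤ, j + m₂ = a) ∧ (∃ a : ℤ, j - m₂ = a) then
    ((Real.sqrt (Real.Gamma (j + m₁ + 1) * Real.Gamma (j - m₁ + 1)) *
        Real.sqrt (Real.Gamma (j + m₂ + 1) * Real.Gamma (j - m₂ + 1)) : ℝ) : ℂ) *
      Complex.exp (Complex.I * n * ζ) *
      Complex.exp (Complex.I * (m₁ * ψ + m₂ * φ)) * ((wignerd j m₁ m₂ θ : ℝ) : ℂ)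
  else 0

/-- Formula (3.25): the left regular action of the raising/lowering elements
`γ₁ ± i γ₂` of `𝔲(2)`, written as explicit differential operators in Euler-angle
coordinates, shifts the first lower index of a Wigner D-function:
`e^{±iψ}(csc θ ∂_φ ± i ∂_θ − cot θ ∂_ψ) W^{(j,n)}_{m₁,m₂}
  = −i √((j∓m₁)(j±m₁+1)) W^{(j,n)}_{m₁±1,m₂}` (sign `ε = ±1`). -/
theorem wignerD_left_raising_lowering (j m₁ m₂ n ε : ℝ) (hj : HalfInt j) (hj0 : 0 ≤ j)
    (hm₁ : HalfInt m₁) (hm₂ : HalfInt m₂)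
    (hjm₁ : ∃ a : ℤ, j + m₁ = a) (hjm₂ : ∃ a : ℤ, j + m₂ = a)
    (hm₁l : -j ≤ m₁) (hm₁u : m₁ ≤ j) (hm₂l : -j ≤ m₂) (hm₂u : m₂ ≤ j)
    (hε : ε = 1 ∨ ε = -1) (ζ ψ φ : ℝ) (θ : ℝ) (hθ : θ ∈ Set.Ioo 0 Real.pi) :
    Complex.exp ((ε : ℂ) * Complex.I * (ψ : ℂ)) *
        ((((Real.sin θ)⁻¹ : ℝ) : ℂ) *
            deriv (fun t : ℝ => WignerD j n m₁ m₂ ζ ψ θ t) φ +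
          (ε : ℂ) * Complex.I * deriv (fun t : ℝ => WignerD j n m₁ m₂ ζ ψ t φ) θ -
          ((Real.cos θ / Real.sin θ : ℝ) : ℂ) *
            deriv (fun t : ℝ => WignerD j n m₁ m₂ ζ t θ φ) ψ) =
      -Complex.I * ((Real.sqrt ((j - ε * m₁) * (j + ε * m₁ + 1)) : ℝ) : ℂ) *
        WignerD j n (m₁ + ε) m₂ ζ ψ θ φ := by
  obtain ⟨k, hk⟩ := hj
  obtain ⟨a, hA0⟩ := hjm₁
  obtain ⟨c2, hC0⟩ := hjm₂
  have hk2 : (k : ℝ) = 2 * j := by rw [hk]; ring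
  set b : ℤ := k - c2 with hb_def
  set μ : ℤ := c2 - a with hμ_def
  have hA : (a : ℝ) = j + m₁ := hA0.symm
  have hB : (b : ℝ) = j - m₂ := by rw [hb_def]; push_cast; linarith
  have hM : (μ : ℝ) = m₂ - m₁ := by rw [hμ_def]; push_cast; linarith
  have ha0 : 0 ≤ a := by
    have : (0:ℝ) ≤ (a:ℝ) := by rw [hA]; linarith
    exact_mod_cast this
  have hb0 : 0 ≤ b := by
    have : (0:ℝ) ≤ (b:ℝ) := by rw [hB]; linarith
    exact_mod_cast this
  have haμ : 0 ≤ a + μ := by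
    have : (0:ℝ) ≤ ((a + μ : ℤ):ℝ) := by push_cast; linarith
    exact_mod_cast this
  have hbμ : 0 ≤ b + μ := by
    have : (0:ℝ) ≤ ((b + μ : ℤ):ℝ) := by push_cast; linarith
    exact_mod_cast this
  have hsθ : Real.sin θ ≠ 0 := ne_of_gt (Real.sin_pos_of_pos_of_lt_pi hθ.1 hθ.2)
  have hcond : (-j ≤ m₁ ∧ m₁ ≤ j) ∧ (-j ≤ m₂ ∧ m₂ ≤ j) ∧
      (∃ z : ℤ, j + m₁ = z) ∧ (∃ z : ℤ, j - m₁ = z) ∧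
      (∃ z : ℤ, j + m₂ = z) ∧ (∃ z : ℤ, j - m₂ = z) :=
    ⟨⟨hm₁l, hm₁u⟩, ⟨hm₂l, hm₂u⟩, ⟨a, hA.symm⟩, ⟨b + μ, by push_cast; linarith⟩,
      ⟨a + μ, by push_cast; linarith⟩, ⟨b, hB.symm⟩⟩
  -- differentiability of the little d-function
  have hXfun : (fun t => wignerd j m₁ m₂ t)
      = (fun t => ∑ p ∈ Finset.Icc (max 0 (-μ)) (min b a),
          K a b μ p * Real.sin (t / 2) ^ (μ + 2 * p).toNat
            * Real.cos (t / 2) ^ (a + b - 2 * p).toNat) :=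
    funext (fun t => wignerd_eq j m₁ m₂ a b μ hA hB hM t)
  have hdiff : DifferentiableAt ℝ (fun t => wignerd j m₁ m₂ t) θ := by
    rw [hXfun]; exact (wignerd_hasDerivAt a b μ θ).differentiableAt
  have hval : HasDerivAt (fun t => wignerd j m₁ m₂ t)
      (deriv (fun t => wignerd j m₁ m₂ t) θ) θ := hdiff.hasDerivAt
  -- the real core identity
  have hcore : ε * (Real.sin θ * deriv (fun t => wignerd j m₁ m₂ t) θ)
      + (m₂ - m₁ * Real.cos θ) * wignerd j m₁ m₂ θ
      = -(j + ε * m₁ + 1) * (Real.sin θ * wignerd j (m₁ + ε) m₂ θ) := by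
    rcases hε with rfl | rfl
    · linear_combination core_raise j m₁ m₂ a b μ hA hB hM ha0 hb0 θ
    · rw [show m₁ + (-1 : ℝ) = m₁ - 1 by ring]
      linear_combination core_lower j m₁ m₂ a b μ hA hB hM ha0 hb0 haμ hbμ θ
  have hRID : (Real.sin θ)⁻¹ * (m₂ * wignerd j m₁ m₂ θ)
      + ε * deriv (fun t => wignerd j m₁ m₂ t) θ
      - Real.cos θ / Real.sin θ * (m₁ * wignerd j m₁ m₂ θ)
      = -(j + ε * m₁ + 1) * wignerd j (m₁ + ε) m₂ θ := by
    field_simp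
    linear_combination hcore
  -- normalization constants identity
  have hkey : Real.sqrt ((j - ε * m₁) * (j + ε * m₁ + 1))
        * (Real.sqrt (Real.Gamma (j + (m₁ + ε) + 1) * Real.Gamma (j - (m₁ + ε) + 1))
          * Real.sqrt (Real.Gamma (j + m₂ + 1) * Real.Gamma (j - m₂ + 1)))
        * wignerd j (m₁ + ε) m₂ θ
      = (j + ε * m₁ + 1)
        * (Real.sqrt (Real.Gamma (j + m₁ + 1) * Real.Gamma (j - m₁ + 1))
          * Real.sqrt (Real.Gamma (j + m₂ + 1) * Real.Gamma (j - m₂ + 1)))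
        * wignerd j (m₁ + ε) m₂ θ := by
    rcases hε with rfl | rfl
    · rcases eq_or_lt_of_le hbμ with hdeg | hnd
      · rw [show m₁ + (1:ℝ) = m₁ + 1 by norm_num,
          wignerd_empty_raise j m₁ m₂ a b μ (by push_cast; linarith) hB
            (by push_cast; linarith) (by omega)]
        ring
      · have h2 : 0 < j - m₁ := by
          have : (1:ℝ) ≤ ((b + μ : ℤ):ℝ) := by exact_mod_cast hnd
          push_cast at this; linarith
        have h1 : 0 < j + m₁ + 1 := by
          have : (0:ℝ) ≤ (a:ℝ) := by exact_mod_cast ha0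
          rw [hA] at this; linarith
        rw [show j - 1 * m₁ = j - m₁ by ring, show j + 1 * m₁ + 1 = j + m₁ + 1 by ring]
        linear_combination (Real.sqrt (Real.Gamma (j + m₂ + 1) * Real.Gamma (j - m₂ + 1))
          * wignerd j (m₁ + 1) m₂ θ) * const_raise j m₁ h1 h2
    · rcases eq_or_lt_of_le ha0 with hdeg | hnd
      · rw [show m₁ + (-1:ℝ) = m₁ - 1 by ring,
          wignerd_empty_lower j m₁ m₂ a b μ (by push_cast; linarith) hB
            (by push_cast; linarith) (by omega)]
        ring
      · have h2 : 0 < j + m₁ := by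
          have : (1:ℝ) ≤ (a:ℝ) := by exact_mod_cast hnd
          rw [hA] at this; linarith
        have h1 : 0 < j - m₁ + 1 := by
          have : (0:ℝ) ≤ ((b + μ : ℤ):ℝ) := by exact_mod_cast hbμ
          push_cast at this; linarith
        rw [show m₁ + (-1:ℝ) = m₁ - 1 by ring, show j - -1 * m₁ = j + m₁ by ring,
          show j + -1 * m₁ + 1 = j - m₁ + 1 by ring]
        linear_combination (Real.sqrt (Real.Gamma (j + m₂ + 1) * Real.Gamma (j - m₂ + 1))
          * wignerd j (m₁ - 1) m₂ θ) * const_lower j m₁ h1 h2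
  -- complex pieces
  have h0φ : HasDerivAt (fun t : ℝ => (t : ℂ)) 1 φ := by
    simpa using (hasDerivAt_id φ).ofReal_comp
  have h0ψ : HasDerivAt (fun t : ℝ => (t : ℂ)) 1 ψ := by
    simpa using (hasDerivAt_id ψ).ofReal_comp
  have hlinφ : HasDerivAt (fun t : ℝ => Complex.I * ((m₁ : ℂ) * (ψ : ℂ) + (m₂ : ℂ) * (t : ℂ)))
      (Complex.I * ((m₂ : ℂ) * 1)) φ :=
    ((h0φ.const_mul ((m₂ : ℂ))).const_add ((m₁ : ℂ) * (ψ : ℂ))).const_mul Complex.I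
  have hlinψ : HasDerivAt (fun t : ℝ => Complex.I * ((m₁ : ℂ) * (t : ℂ) + (m₂ : ℂ) * (φ : ℂ)))
      (Complex.I * ((m₁ : ℂ) * 1)) ψ :=
    ((h0ψ.const_mul ((m₁ : ℂ))).add_const ((m₂ : ℂ) * (φ : ℂ))).const_mul Complex.I
  have dφ : deriv (fun t : ℝ => WignerD j n m₁ m₂ ζ ψ θ t) φ
      = ((Real.sqrt (Real.Gamma (j + m₁ + 1) * Real.Gamma (j - m₁ + 1)) *
          Real.sqrt (Real.Gamma (j + m₂ + 1) * Real.Gamma (j - m₂ + 1)) : ℝ) : ℂ)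
        * Complex.exp (Complex.I * n * ζ)
        * (Complex.exp (Complex.I * ((m₁ : ℂ) * ψ + (m₂ : ℂ) * φ)) * (Complex.I * ((m₂ : ℂ) * 1)))
        * ((wignerd j m₁ m₂ θ : ℝ) : ℂ) := by
    have hf : (fun t : ℝ => WignerD j n m₁ m₂ ζ ψ θ t)
        = fun t : ℝ => ((Real.sqrt (Real.Gamma (j + m₁ + 1) * Real.Gamma (j - m₁ + 1)) *
            Real.sqrt (Real.Gamma (j + m₂ + 1) * Real.Gamma (j - m₂ + 1)) : ℝ) : ℂ)
          * Complex.exp (Complex.I * n * ζ)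
          * Complex.exp (Complex.I * ((m₁ : ℂ) * ψ + (m₂ : ℂ) * t))
          * ((wignerd j m₁ m₂ θ : ℝ) : ℂ) :=
      funext fun t => by unfold WignerD; rw [if_pos hcond]
    rw [hf]
    exact ((hlinφ.cexp.const_mul _).mul_const _).deriv
  have dψ : deriv (fun t : ℝ => WignerD j n m₁ m₂ ζ t θ φ) ψ
      = ((Real.sqrt (Real.Gamma (j + m₁ + 1) * Real.Gamma (j - m₁ + 1)) *
          Real.sqrt (Real.Gamma (j + m₂ + 1) * Real.Gamma (j - m₂ + 1)) : ℝ) : ℂ)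
        * Complex.exp (Complex.I * n * ζ)
        * (Complex.exp (Complex.I * ((m₁ : ℂ) * ψ + (m₂ : ℂ) * φ)) * (Complex.I * ((m₁ : ℂ) * 1)))
        * ((wignerd j m₁ m₂ θ : ℝ) : ℂ) := by
    have hf : (fun t : ℝ => WignerD j n m₁ m₂ ζ t θ φ)
        = fun t : ℝ => ((Real.sqrt (Real.Gamma (j + m₁ + 1) * Real.Gamma (j - m₁ + 1)) *
            Real.sqrt (Real.Gamma (j + m₂ + 1) * Real.Gamma (j - m₂ + 1)) : ℝ) : ℂ)
          * Complex.exp (Complex.I * n * ζ)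
          * Complex.exp (Complex.I * ((m₁ : ℂ) * t + (m₂ : ℂ) * φ))
          * ((wignerd j m₁ m₂ θ : ℝ) : ℂ) :=
      funext fun t => by unfold WignerD; rw [if_pos hcond]
    rw [hf]
    exact ((hlinψ.cexp.const_mul _).mul_const _).deriv
  have dθ : deriv (fun t : ℝ => WignerD j n m₁ m₂ ζ ψ t φ) θ
      = ((Real.sqrt (Real.Gamma (j + m₁ + 1) * Real.Gamma (j - m₁ + 1)) *
          Real.sqrt (Real.Gamma (j + m₂ + 1) * Real.Gamma (j - m₂ + 1)) : ℝ) : ℂ)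
        * Complex.exp (Complex.I * n * ζ)
        * Complex.exp (Complex.I * ((m₁ : ℂ) * ψ + (m₂ : ℂ) * φ))
        * ((deriv (fun t => wignerd j m₁ m₂ t) θ : ℝ) : ℂ) := by
    have hf : (fun t : ℝ => WignerD j n m₁ m₂ ζ ψ t φ)
        = fun t : ℝ => ((Real.sqrt (Real.Gamma (j + m₁ + 1) * Real.Gamma (j - m₁ + 1)) *
            Real.sqrt (Real.Gamma (j + m₂ + 1) * Real.Gamma (j - m₂ + 1)) : ℝ) : ℂ)
          * Complex.exp (Complex.I * n * ζ)
          * Complex.exp (Complex.I * ((m₁ : ℂ) * ψ + (m₂ : ℂ) * φ))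
          * ((wignerd j m₁ m₂ t : ℝ) : ℂ) :=
      funext fun t => by unfold WignerD; rw [if_pos hcond]
    rw [hf]
    exact (hval.ofReal_comp.const_mul _).deriv
  -- the shifted Wigner function
  have hWS : WignerD j n (m₁ + ε) m₂ ζ ψ θ φ
      = ((Real.sqrt (Real.Gamma (j + (m₁ + ε) + 1) * Real.Gamma (j - (m₁ + ε) + 1)) *
          Real.sqrt (Real.Gamma (j + m₂ + 1) * Real.Gamma (j - m₂ + 1)) : ℝ) : ℂ)
        * Complex.exp (Complex.I * n * ζ)
        * Complex.exp (Complex.I * (((m₁ + ε : ℝ) : ℂ) * ψ + (m₂ : ℂ) * φ))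
        * ((wignerd j (m₁ + ε) m₂ θ : ℝ) : ℂ) := by
    rcases hε with rfl | rfl
    · rcases eq_or_lt_of_le hbμ with hdeg | hnd
      · have hY : wignerd j (m₁ + 1) m₂ θ = 0 :=
          wignerd_empty_raise j m₁ m₂ a b μ (by push_cast; linarith) hB
            (by push_cast; linarith) (by omega) θ
        have hnotu : ¬ (m₁ + 1 ≤ j) := by
          have : ((b + μ : ℤ):ℝ) = 0 := by exact_mod_cast hdeg.symm
          push_cast at this; linarith
        rw [show m₁ + (1:ℝ) = m₁ + 1 by norm_num] at *
        unfold WignerD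
        rw [if_neg (by tauto), hY]
        simp
      · have h2 : (1:ℝ) ≤ j - m₁ := by
          have : (1:ℝ) ≤ ((b + μ : ℤ):ℝ) := by exact_mod_cast hnd
          push_cast at this; linarith
        have hcond' : (-j ≤ m₁ + 1 ∧ m₁ + 1 ≤ j) ∧ (-j ≤ m₂ ∧ m₂ ≤ j) ∧
            (∃ z : ℤ, j + (m₁ + 1) = z) ∧ (∃ z : ℤ, j - (m₁ + 1) = z) ∧
            (∃ z : ℤ, j + m₂ = z) ∧ (∃ z : ℤ, j - m₂ = z) :=
          ⟨⟨by linarith, by linarith⟩, ⟨hm₂l, hm₂u⟩, ⟨a + 1, by push_cast; linarith⟩,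
            ⟨b + μ - 1, by push_cast; linarith⟩, ⟨a + μ, by push_cast; linarith⟩, ⟨b, hB.symm⟩⟩
        unfold WignerD
        rw [if_pos hcond']
    · rcases eq_or_lt_of_le ha0 with hdeg | hnd
      · have hY : wignerd j (m₁ - 1) m₂ θ = 0 :=
          wignerd_empty_lower j m₁ m₂ a b μ (by push_cast; linarith) hB
            (by push_cast; linarith) (by omega) θ
        have hnotl : ¬ (-j ≤ m₁ - 1) := by
          have : (a:ℝ) = 0 := by exact_mod_cast hdeg.symm
          rw [hA] at this; linarith
        rw [show m₁ + (-1:ℝ) = m₁ - 1 by ring] at *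
        unfold WignerD
        rw [if_neg (by tauto), hY]
        simp
      · have h2 : (1:ℝ) ≤ j + m₁ := by
          have : (1:ℝ) ≤ (a:ℝ) := by exact_mod_cast hnd
          rw [hA] at this; linarith
        have hcond' : (-j ≤ m₁ - 1 ∧ m₁ - 1 ≤ j) ∧ (-j ≤ m₂ ∧ m₂ ≤ j) ∧
            (∃ z : ℤ, j + (m₁ - 1) = z) ∧ (∃ z : ℤ, j - (m₁ - 1) = z) ∧
            (∃ z : ℤ, j + m₂ = z) ∧ (∃ z : ℤ, j - m₂ = z) :=
          ⟨⟨by linarith, by linarith⟩, ⟨hm₂l, hm₂u⟩, ⟨a - 1, by push_cast; linarith⟩,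
            ⟨b + μ + 1, by push_cast; linarith⟩, ⟨a + μ, by push_cast; linarith⟩, ⟨b, hB.symm⟩⟩
        rw [show m₁ + (-1:ℝ) = m₁ - 1 by ring] at *
        unfold WignerD
        rw [if_pos hcond']
  have hsplit : Complex.exp (Complex.I * (((m₁ + ε : ℝ) : ℂ) * ψ + (m₂ : ℂ) * φ))
      = Complex.exp ((ε : ℂ) * Complex.I * ψ)
        * Complex.exp (Complex.I * ((m₁ : ℂ) * ψ + (m₂ : ℂ) * φ)) := by
    rw [← Complex.exp_add]
    congr 1
    push_cast
    ring
  rw [dφ, dψ, dθ, hWS, hsplit]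
  have hRIDc := congrArg (Complex.ofReal) hRID
  push_cast at hRIDc
  have hkeyc := congrArg (Complex.ofReal) hkey
  push_cast at hkeyc
  push_cast
  linear_combination (Complex.exp ((ε:ℂ) * Complex.I * (ψ:ℂ))
        * ((Real.sqrt (Real.Gamma (j + m₁ + 1) * Real.Gamma (j - m₁ + 1)) : ℝ) : ℂ)
        * ((Real.sqrt (Real.Gamma (j + m₂ + 1) * Real.Gamma (j - m₂ + 1)) : ℝ) : ℂ)
        * Complex.exp (Complex.I * n * ζ)
        * Complex.exp (Complex.I * ((m₁ : ℂ) * ψ + (m₂ : ℂ) * φ)) * Complex.I) * hRIDc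
    + (Complex.I * Complex.exp ((ε:ℂ) * Complex.I * (ψ:ℂ))
        * Complex.exp (Complex.I * n * ζ)
        * Complex.exp (Complex.I * ((m₁ : ℂ) * ψ + (m₂ : ℂ) * φ))) * hkeyc
end

section
/- For every z ∈ ℂ and w ∈ ℝ, set u = |z|² − 2iw and R = √((|z|²+1)² + 4w²) (a positive real), and define the 3×3 complex matrices P = [[1/√2, 0, −1/√2], [0, 1, 0], [1/√2, 0, 1/√2]]; n̄ = [[1, 0, 0], [√2·z, 1, 0], [|z|²−2iw, √2·conj(z), 1]]; K = [[−(u−1)/R, −2·conj(z)/(u+1), 0], [2z/R, −(conj(u)−1)/(u+1), 0], [0, 0, (u+1)/R]]; A = diag(R, 1, 1/R); N = [[1, √2·conj(z)/(u+1), conj(u)/R²], [0, 1, √2·z/(conj(u)+1)], [0, 0, 1]]. Then P · n̄ · P⁻¹ = K · (P · A · N · P⁻¹). -/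
open Matrix

set_option maxHeartbeats 1000000 in
/-- The explicit Iwasawa decomposition (5.3) of the paper: with
`u = |z|² − 2iw` and `R = √((|z|²+1)² + 4w²)`, the conjugate `P·n̄·P⁻¹` of a generic
element `n̄` of the opposite nilpotent subgroup of `SU(2,1)` decomposes as the product of
a unitary factor `K`, and the conjugate `P·A·N·P⁻¹` of a torus factor `A` and a nilpotent
factor `N`. -/
theorem su21_iwasawa_decomposition (z : ℂ) (w : ℝ) (u : ℂ) (R : ℝ)
    (hu : u = ((‖z‖ : ℝ) : ℂ) ^ 2 - 2 * Complex.I * (w : ℂ))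
    (hR : R = Real.sqrt ((‖z‖ ^ 2 + 1) ^ 2 + 4 * w ^ 2))
    (P nbar K A N : Matrix (Fin 3) (Fin 3) ℂ)
    (hP : P = !![((1 / Real.sqrt 2 : ℝ) : ℂ), 0, -((1 / Real.sqrt 2 : ℝ) : ℂ);
                  0, 1, 0;
                  ((1 / Real.sqrt 2 : ℝ) : ℂ), 0, ((1 / Real.sqrt 2 : ℝ) : ℂ)])
    (hnbar : nbar = !![1, 0, 0;
                       ((Real.sqrt 2 : ℝ) : ℂ) * z, 1, 0;
                       ((‖z‖ : ℝ) : ℂ) ^ 2 - 2 * Complex.I * (w : ℂ),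
                         ((Real.sqrt 2 : ℝ) : ℂ) * (starRingEnd ℂ) z, 1])
    (hK : K = !![-(u - 1) / (R : ℂ), -2 * (starRingEnd ℂ) z / (u + 1), 0;
                 2 * z / (R : ℂ), -((starRingEnd ℂ) u - 1) / (u + 1), 0;
                 0, 0, (u + 1) / (R : ℂ)])
    (hA : A = Matrix.diagonal ![(R : ℂ), 1, 1 / (R : ℂ)])
    (hN : N = !![1, ((Real.sqrt 2 : ℝ) : ℂ) * (starRingEnd ℂ) z / (u + 1),
                   (starRingEnd ℂ) u / (R : ℂ) ^ 2;
                 0, 1, ((Real.sqrt 2 : ℝ) : ℂ) * z / ((starRingEnd ℂ) u + 1);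
                 0, 0, 1]) :
    P * nbar * P⁻¹ = K * (P * A * N * P⁻¹) := by
  have hzc : ((‖z‖ : ℝ) : ℂ) ^ 2 = z * (starRingEnd ℂ) z := by
    rw [Complex.mul_conj]; norm_cast; exact Complex.sq_norm z
  have hcu : (starRingEnd ℂ) u = z * (starRingEnd ℂ) z + 2 * Complex.I * (w : ℂ) := by
    rw [hu]; simp [map_sub, _root_.map_mul, map_ofNat, Complex.conj_I, Complex.conj_ofReal, hzc]; ring
  have hRpos : (0:ℝ) < R := by
    rw [hR]; positivity
  have hr2 : ((R : ℝ) : ℂ) ^ 2 = (u + 1) * ((starRingEnd ℂ) u + 1) := by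
    have : (R:ℝ)^2 = (‖z‖ ^ 2 + 1) ^ 2 + 4 * w ^ 2 := by
      rw [hR]; exact Real.sq_sqrt (by positivity)
    have h2 : ((R : ℝ) : ℂ) ^ 2 = (((‖z‖:ℝ):ℂ) ^ 2 + 1) ^ 2 + 4 * (w:ℂ) ^ 2 := by
      rw [show ((R:ℝ):ℂ)^2 = ((R^2 : ℝ):ℂ) by push_cast; ring, this]; push_cast; ring
    rw [h2, hcu, hu, hzc]
    linear_combination (4*(w:ℂ)^2) * Complex.I_sq
  have hrne : ((R:ℝ):ℂ) ≠ 0 := by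
    exact_mod_cast ne_of_gt (by exact_mod_cast hRpos : ((0:ℝ):ℝ) < R)
  have hprod : (u + 1) * ((starRingEnd ℂ) u + 1) ≠ 0 := hr2 ▸ pow_ne_zero 2 hrne
  have hu1 : u + 1 ≠ 0 := (mul_ne_zero_iff.mp hprod).1
  have hcu1 : (starRingEnd ℂ) u + 1 ≠ 0 := (mul_ne_zero_iff.mp hprod).2
  have hs2 : ((Real.sqrt 2 : ℝ) : ℂ) ^ 2 = 2 := by
    norm_cast; exact Real.sq_sqrt (by norm_num)
  have hsne : ((Real.sqrt 2 : ℝ) : ℂ) ≠ 0 := by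
    intro h; rw [← sq_eq_zero_iff, hs2] at h; norm_num at h
  have key : P * nbar = K * (P * A * N) := by
    have hAeq : A = !![((R:ℝ):ℂ),0,0;0,1,0;0,0,1/((R:ℝ):ℂ)] := by
      subst hA; ext i j; fin_cases i <;> fin_cases j <;> simp [Matrix.diagonal_apply, Matrix.vecHead, Matrix.vecTail]
    rw [hAeq]
    subst hP hnbar hK hN
    rw [← hu]
    have hu2 : u = z * (starRingEnd ℂ) z - 2 * Complex.I * (w:ℂ) := by rw [hu, hzc]
    have hI : Complex.I ^ 2 = -1 := Complex.I_sq
    have hr2' : ((R:ℝ):ℂ) ^ 2 = (z * (starRingEnd ℂ) z + 1) ^ 2 + 4 * (w:ℂ) ^ 2 := by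
      rw [hr2, hcu, hu2]; linear_combination (-4*(w:ℂ)^2) * hI
    have hu1' : z * (starRingEnd ℂ) z - 2 * Complex.I * (w:ℂ) + 1 ≠ 0 := by
      rw [← hu2]; exact hu1
    have hcu1' : z * (starRingEnd ℂ) z + 2 * Complex.I * (w:ℂ) + 1 ≠ 0 := by
      rw [← hcu]; exact hcu1
    have hbig : 1 + z * (starRingEnd ℂ) z * 2 + (z ^ 2 * (starRingEnd ℂ) z ^ 2 - Complex.I ^ 2 * (w:ℂ) ^ 2 * 4) ≠ 0 := by
      have : 1 + z * (starRingEnd ℂ) z * 2 + (z ^ 2 * (starRingEnd ℂ) z ^ 2 - Complex.I ^ 2 * (w:ℂ) ^ 2 * 4)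
          = (z * (starRingEnd ℂ) z - 2 * Complex.I * (w:ℂ) + 1) * (z * (starRingEnd ℂ) z + 2 * Complex.I * (w:ℂ) + 1) := by ring
      rw [this]; exact mul_ne_zero hu1' hcu1'
    have hDr : 1 + z * (starRingEnd ℂ) z * 2 + (z ^ 2 * (starRingEnd ℂ) z ^ 2 - Complex.I ^ 2 * (w:ℂ) ^ 2 * 4) = ((R:ℝ):ℂ) ^ 2 := by
      linear_combination -hr2' - 4*(w:ℂ)^2 * hI
    simp only [Matrix.mul_fin_three]
    ext i j
    fin_cases i <;> fin_cases j <;>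
      simp [Matrix.vecHead, Matrix.vecTail, hu2, hcu, map_sub, _root_.map_mul, map_ofNat,
        Complex.conj_conj, Complex.conj_I, Complex.conj_ofReal] <;>
      field_simp [hbig, hrne, hsne, hu1', hcu1'] <;> ring_nf
    all_goals try simp only [hDr]
    all_goals try field_simp
    all_goals ring_nf
    · have hD : 1 + (starRingEnd ℂ) z * z - Complex.I * ↑w * 2 ≠ 0 := by
        convert hu1' using 1; ring
      field_simp
      ring
    · grind
    · grind
    · grind
    · have hD : 1 + (starRingEnd ℂ) z * z - Complex.I * ↑w * 2 ≠ 0 := by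
        convert hu1' using 1; ring
      field_simp
      ring
    · grind
  calc P * nbar * P⁻¹ = K * (P * A * N) * P⁻¹ := by rw [key]
    _ = K * (P * A * N * P⁻¹) := by rw [mul_assoc]
end
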